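/- Fix a bipartition of the finite vertex set V into two disjoint parts U and W, and let d : V → ℕ be a graphical degree sequence (one having at least one realization). Let m and M be, respectively, the minimum and the maximum of ε(G) over all realizations G of d. Then for every natural number k, there exists a realization G of d with ε(G) = k if and only if m ≤ k ≤ M and k ≡ m (mod 2). -/

import Mathlib

open SimpleGraph

variable {V : Type*}

/-- Degree of `v` in `G`, via `Set.ncard`. -/
noncomputable def gdeg (G : SimpleGraph V) (v : V) : ℕ := (G.neighborSet v).ncard

/-- `G` realizes the degree sequence `d`. -/
def IsRealization (G : SimpleGraph V) (d : V → ℕ) : Prop := ∀ v, gdeg G v = d v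

/-- Number of crossing edges of `G` w.r.t. the bipartition `(U, W)`. -/
noncomputable def crossCount (U W : Set V) (G : SimpleGraph V) : ℕ :=
  {e ∈ G.edgeSet | ∃ u ∈ U, ∃ w ∈ W, e = s(u, w)}.ncard

/-- Number of edges of `G` with one endpoint in `P` and the other in `Q`. -/
noncomputable def eCount (G : SimpleGraph V) (P Q : Set V) : ℕ :=
  {e ∈ G.edgeSet | ∃ p ∈ P, ∃ q ∈ Q, e = s(p, q)}.ncard

/-- `r(G, G')`, the number of edges of `G` that are not edges of `G'`. -/
noncomputable def rdist (G G' : SimpleGraph V) : ℕ := (G.edgeSet \ G'.edgeSet).ncard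

/-- `G'` is obtained from `G` by a swap all of whose four vertices lie in `A`. -/
def IsSwapWithin (A : Set V) (G G' : SimpleGraph V) : Prop :=
  ∃ a b c d : V, a ∈ A ∧ b ∈ A ∧ c ∈ A ∧ d ∈ A ∧
    a ≠ b ∧ a ≠ c ∧ a ≠ d ∧ b ≠ c ∧ b ≠ d ∧ c ≠ d ∧
    G.Adj a b ∧ G.Adj c d ∧ ¬ G.Adj b c ∧ ¬ G.Adj a d ∧
    G'.edgeSet = (G.edgeSet \ {s(a, b), s(c, d)}) ∪ {s(b, c), s(a, d)}

/-- `G'` is obtained from `G` by a swap. -/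
def IsSwap (G G' : SimpleGraph V) : Prop := IsSwapWithin Set.univ G G'

/-- `G'` is obtained from `G` by a double swap (two simultaneous disjoint swaps). -/
def IsDoubleSwap (G G' : SimpleGraph V) : Prop :=
  ∃ a b c d e f g h : V,
    List.Pairwise (· ≠ ·) [a, b, c, d, e, f, g, h] ∧
    G.Adj a b ∧ G.Adj c d ∧ G.Adj e f ∧ G.Adj g h ∧
    ¬ G.Adj b c ∧ ¬ G.Adj a d ∧ ¬ G.Adj f g ∧ ¬ G.Adj e h ∧
    G'.edgeSet = (G.edgeSet \ {s(a, b), s(c, d), s(e, f), s(g, h)}) ∪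
      {s(b, c), s(a, d), s(f, g), s(e, h)}

/-- The `i`-th edge of the closed walk whose vertices are listed (cyclically) by `c`. -/
def stepEdge (c : List V) (i : Fin c.length) : Sym2 V :=
  s(c.get i, c.get ⟨(i.val + 1) % c.length, Nat.mod_lt _ i.pos⟩)

/-- The set of edges of the closed walk listed by `c`. -/
def circuitEdges (c : List V) : Set (Sym2 V) := Set.range (stepEdge c)

/-- The vertex list `c` describes an alternating circuit of the pair `(G, G')`:
a closed walk of even positive length, with pairwise distinct edges, whose edges lie
alternately in `E(G) \ E(G')` and `E(G') \ E(G)`, visiting no vertex more than twice. -/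
def IsAltCircuit (G G' : SimpleGraph V) (c : List V) : Prop :=
  0 < c.length ∧ Even c.length ∧
  (∀ i j : Fin c.length, stepEdge c i = stepEdge c j → i = j) ∧
  (∀ i : Fin c.length, i.val % 2 = 0 → stepEdge c i ∈ G.edgeSet \ G'.edgeSet) ∧
  (∀ i : Fin c.length, i.val % 2 = 1 → stepEdge c i ∈ G'.edgeSet \ G.edgeSet) ∧
  (∀ v : V, {i : Fin c.length | c.get i = v}.ncard ≤ 2)

/-- A decomposition of `E(G) △ E(G')` into (edge sets of) alternating circuits. -/
def IsAltCircuitDecomp (G G' : SimpleGraph V) (𝒞 : Finset (List V)) : Prop :=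
  (∀ c ∈ 𝒞, IsAltCircuit G G' c) ∧
  (∀ c ∈ 𝒞, ∀ c' ∈ 𝒞, c ≠ c' → Disjoint (circuitEdges c) (circuitEdges c')) ∧
  (⋃ c ∈ 𝒞, circuitEdges c) = symmDiff G.edgeSet G'.edgeSet

/-- Number of edges of `G` whose endpoints have classes `P` and `Q` under `π`. -/
noncomputable def wcount {C : Type*} (π : V → C) (G : SimpleGraph V) (P Q : C) : ℕ :=
  {e ∈ G.edgeSet | ∃ x y : V, e = s(x, y) ∧ π x = P ∧ π y = Q}.ncard

/-- Sum of the degree sequence over a class. -/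
noncomputable def Dsum (d : V → ℕ) (U : Set V) : ℕ := ∑ᶠ v ∈ U, d v

/-- `G` is weakly consistent with the cycle skeleton on the classes `U 0, …, U (n-1)`. -/
def WeaklyCycleConsistent (n : ℕ) [NeZero n] (U : Fin n → Set V) (G : SimpleGraph V) : Prop :=
  ∀ e ∈ G.edgeSet, ∃ (i : Fin n) (x y : V), e = s(x, y) ∧ x ∈ U i ∧ y ∈ U (i + 1)

/-- `G` is weakly consistent with the skeleton graph `S` on the classes `U`. -/
def WeaklyConsistent {C : Type*} (U : C → Set V) (S : SimpleGraph C) (G : SimpleGraph V) : Prop :=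
  ∀ e ∈ G.edgeSet, ∃ (P Q : C) (x y : V), S.Adj P Q ∧ e = s(x, y) ∧ x ∈ U P ∧ y ∈ U Q

/-- `G'` is obtained from `G` by an `F`-swap all of whose vertices lie in `A`:
the edges and non-chord-restricted non-edges are exchanged along an alternating
circuit of chords `c` in which every parity-crossing non-circuit pair is forbidden. -/
def IsFSwapWithin (A : Set V) (F : Set (Sym2 V)) (G G' : SimpleGraph V) : Prop :=
  ∃ c : List V, (∀ v ∈ c, v ∈ A) ∧ 0 < c.length ∧ Even c.length ∧
    (∀ i j : Fin c.length, stepEdge c i = stepEdge c j → i = j) ∧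
    (∀ i : Fin c.length, i.val % 2 = 0 → stepEdge c i ∈ G.edgeSet) ∧
    (∀ i : Fin c.length, i.val % 2 = 1 → stepEdge c i ∉ G.edgeSet ∧ stepEdge c i ∉ F) ∧
    (∀ i j : Fin c.length, i.val % 2 ≠ j.val % 2 → c.get i ≠ c.get j →
      s(c.get i, c.get j) ∉ circuitEdges c → s(c.get i, c.get j) ∈ F) ∧
    G'.edgeSet = (G.edgeSet \ {e | ∃ i : Fin c.length, i.val % 2 = 0 ∧ e = stepEdge c i}) ∪
      {e | ∃ i : Fin c.length, i.val % 2 = 1 ∧ e = stepEdge c i}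

set_option linter.unusedSectionVars false

section SwapProofs

open Relation
open scoped Classical

lemma sym2_ne {a b c d : V} (h1 : ¬(a = c ∧ b = d)) (h2 : ¬(a = d ∧ b = c)) :
    s(a,b) ≠ s(c,d) := by
  intro h; rw [Sym2.eq_iff] at h; tauto

structure SwapCfg (G H : SimpleGraph V) (a b c d : V) : Prop where
  hab : a ≠ b
  hac : a ≠ c
  had : a ≠ d
  hbc : b ≠ c
  hbd : b ≠ d
  hcd : c ≠ d
  Gab : G.Adj a b
  Gcd : G.Adj c d
  nbc : ¬ G.Adj b c
  nad : ¬ G.Adj a d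
  hE : H.edgeSet = (G.edgeSet \ {s(a,b), s(c,d)}) ∪ {s(b,c), s(a,d)}

namespace SwapCfg

variable {G H : SimpleGraph V} {a b c d : V}

lemma isSwap (cfg : SwapCfg G H a b c d) : IsSwap G H :=
  ⟨a, b, c, d, trivial, trivial, trivial, trivial, cfg.hab, cfg.hac, cfg.had,
    cfg.hbc, cfg.hbd, cfg.hcd, cfg.Gab, cfg.Gcd, cfg.nbc, cfg.nad, cfg.hE⟩

lemma exists_swap (hab : a ≠ b) (hac : a ≠ c) (had : a ≠ d) (hbc : b ≠ c)
    (hbd : b ≠ d) (hcd : c ≠ d) (Gab : G.Adj a b) (Gcd : G.Adj c d)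
    (nbc : ¬ G.Adj b c) (nad : ¬ G.Adj a d) :
    ∃ H : SimpleGraph V, SwapCfg G H a b c d := by
  refine ⟨SimpleGraph.fromEdgeSet ((G.edgeSet \ {s(a,b), s(c,d)}) ∪ {s(b,c), s(a,d)}),
    hab, hac, had, hbc, hbd, hcd, Gab, Gcd, nbc, nad, ?_⟩
  rw [edgeSet_fromEdgeSet]
  rw [sdiff_eq_left]
  rw [Set.disjoint_left]
  rintro e he
  simp only [Set.mem_union, Set.mem_diff, Set.mem_insert_iff, Set.mem_singleton_iff] at he
  rcases he with ⟨heG, -⟩ | rfl | rfl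
  · exact G.not_isDiag_of_mem_edgeSet heG
  · exact fun hdiag => hbc (Sym2.mk_isDiag_iff.1 hdiag)
  · exact fun hdiag => had (Sym2.mk_isDiag_iff.1 hdiag)

lemma nb_a (cfg : SwapCfg G H a b c d) :
    H.neighborSet a = insert d (G.neighborSet a \ {b}) := by
  have hab := cfg.hab; have hac := cfg.hac; have had := cfg.had
  have hbc := cfg.hbc; have hbd := cfg.hbd; have hcd := cfg.hcd
  ext y
  rw [mem_neighborSet, ← SimpleGraph.mem_edgeSet, cfg.hE]
  simp only [Set.mem_union, Set.mem_diff, Set.mem_insert_iff, Set.mem_singleton_iff,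
    Sym2.eq_iff, SimpleGraph.mem_edgeSet, ne_eq]
  aesop

lemma nb_b (cfg : SwapCfg G H a b c d) :
    H.neighborSet b = insert c (G.neighborSet b \ {a}) := by
  have hab := cfg.hab; have hac := cfg.hac; have had := cfg.had
  have hbc := cfg.hbc; have hbd := cfg.hbd; have hcd := cfg.hcd
  ext y
  rw [mem_neighborSet, ← SimpleGraph.mem_edgeSet, cfg.hE]
  simp only [Set.mem_union, Set.mem_diff, Set.mem_insert_iff, Set.mem_singleton_iff,
    Sym2.eq_iff, SimpleGraph.mem_edgeSet, ne_eq]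
  aesop

lemma nb_c (cfg : SwapCfg G H a b c d) :
    H.neighborSet c = insert b (G.neighborSet c \ {d}) := by
  have hab := cfg.hab; have hac := cfg.hac; have had := cfg.had
  have hbc := cfg.hbc; have hbd := cfg.hbd; have hcd := cfg.hcd
  ext y
  rw [mem_neighborSet, ← SimpleGraph.mem_edgeSet, cfg.hE]
  simp only [Set.mem_union, Set.mem_diff, Set.mem_insert_iff, Set.mem_singleton_iff,
    Sym2.eq_iff, SimpleGraph.mem_edgeSet, ne_eq]
  aesop

lemma nb_d (cfg : SwapCfg G H a b c d) :
    H.neighborSet d = insert a (G.neighborSet d \ {c}) := by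
  have hab := cfg.hab; have hac := cfg.hac; have had := cfg.had
  have hbc := cfg.hbc; have hbd := cfg.hbd; have hcd := cfg.hcd
  ext y
  rw [mem_neighborSet, ← SimpleGraph.mem_edgeSet, cfg.hE]
  simp only [Set.mem_union, Set.mem_diff, Set.mem_insert_iff, Set.mem_singleton_iff,
    Sym2.eq_iff, SimpleGraph.mem_edgeSet, ne_eq]
  aesop

lemma nb_other (cfg : SwapCfg G H a b c d) {v : V} (hva : v ≠ a) (hvb : v ≠ b)
    (hvc : v ≠ c) (hvd : v ≠ d) : H.neighborSet v = G.neighborSet v := by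
  ext y
  rw [mem_neighborSet, ← SimpleGraph.mem_edgeSet, cfg.hE]
  simp only [Set.mem_union, Set.mem_diff, Set.mem_insert_iff, Set.mem_singleton_iff,
    Sym2.eq_iff, SimpleGraph.mem_edgeSet, ne_eq]
  aesop

section More
variable [Fintype V]

lemma mem_nb_ab (cfg : SwapCfg G H a b c d) : b ∈ G.neighborSet a := cfg.Gab
lemma not_mem_nb_ad (cfg : SwapCfg G H a b c d) : d ∉ G.neighborSet a := cfg.nad
lemma mem_nb_ba (cfg : SwapCfg G H a b c d) : a ∈ G.neighborSet b := cfg.Gab.symm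
lemma not_mem_nb_bc (cfg : SwapCfg G H a b c d) : c ∉ G.neighborSet b := cfg.nbc
lemma mem_nb_cd (cfg : SwapCfg G H a b c d) : d ∈ G.neighborSet c := cfg.Gcd
lemma not_mem_nb_cb (cfg : SwapCfg G H a b c d) : b ∉ G.neighborSet c :=
  fun h => cfg.nbc h.symm
lemma mem_nb_dc (cfg : SwapCfg G H a b c d) : c ∈ G.neighborSet d := cfg.Gcd.symm
lemma not_mem_nb_da (cfg : SwapCfg G H a b c d) : a ∉ G.neighborSet d :=
  fun h => cfg.nad h.symm

lemma gdeg_eq (cfg : SwapCfg G H a b c d) (v : V) : gdeg H v = gdeg G v := by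
  by_cases hva : v = a
  · subst hva; rw [gdeg, gdeg, cfg.nb_a, Set.ncard_exchange cfg.not_mem_nb_ad cfg.mem_nb_ab]
  by_cases hvb : v = b
  · subst hvb; rw [gdeg, gdeg, cfg.nb_b, Set.ncard_exchange cfg.not_mem_nb_bc cfg.mem_nb_ba]
  by_cases hvc : v = c
  · subst hvc; rw [gdeg, gdeg, cfg.nb_c, Set.ncard_exchange cfg.not_mem_nb_cb cfg.mem_nb_cd]
  by_cases hvd : v = d
  · subst hvd; rw [gdeg, gdeg, cfg.nb_d, Set.ncard_exchange cfg.not_mem_nb_da cfg.mem_nb_dc]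
  rw [gdeg, gdeg, cfg.nb_other hva hvb hvc hvd]

end More

section Inner
variable [Fintype V]

lemma insert_diff_inter {α : Type*} {N S : Set α} {x y : α} (hx : x ∈ S) :
    (insert x (N \ {y})) ∩ S = insert x ((N ∩ S) \ {y}) := by
  ext u
  simp only [Set.mem_inter_iff, Set.mem_insert_iff, Set.mem_diff, Set.mem_singleton_iff]
  constructor
  · rintro ⟨rfl | ⟨h1, h2⟩, hS⟩
    · exact Or.inl rfl
    · exact Or.inr ⟨⟨h1, hS⟩, h2⟩
  · rintro (rfl | ⟨⟨h1, hS⟩, h2⟩)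
    · exact ⟨Or.inl rfl, hx⟩
    · exact ⟨Or.inr ⟨h1, h2⟩, hS⟩

/-- inner degrees within `S` are preserved by a swap whose four vertices lie in `S`. -/
lemma inner_ncard_eq (cfg : SwapCfg G H a b c d) {S : Set V}
    (haS : a ∈ S) (hbS : b ∈ S) (hcS : c ∈ S) (hdS : d ∈ S) (v : V) :
    (H.neighborSet v ∩ S).ncard = (G.neighborSet v ∩ S).ncard := by
  by_cases hva : v = a
  · subst hva
    rw [cfg.nb_a, insert_diff_inter hdS,
      Set.ncard_exchange (fun h => cfg.not_mem_nb_ad h.1) (Set.mem_inter cfg.mem_nb_ab hbS)]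
  by_cases hvb : v = b
  · subst hvb
    rw [cfg.nb_b, insert_diff_inter hcS,
      Set.ncard_exchange (fun h => cfg.not_mem_nb_bc h.1) (Set.mem_inter cfg.mem_nb_ba haS)]
  by_cases hvc : v = c
  · subst hvc
    rw [cfg.nb_c, insert_diff_inter hbS,
      Set.ncard_exchange (fun h => cfg.not_mem_nb_cb h.1) (Set.mem_inter cfg.mem_nb_cd hdS)]
  by_cases hvd : v = d
  · subst hvd
    rw [cfg.nb_d, insert_diff_inter haS,
      Set.ncard_exchange (fun h => cfg.not_mem_nb_da h.1) (Set.mem_inter cfg.mem_nb_dc hcS)]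
  rw [cfg.nb_other hva hvb hvc hvd]

end Inner

section Cross
variable [Fintype V]

lemma ncard_sep_pair {α : Type*} (P : α → Prop) {p q : α} (h : p ≠ q) :
    {x ∈ ({p, q} : Set α) | P x}.ncard
      = (if P p then 1 else 0) + (if P q then 1 else 0) := by
  classical
  by_cases hp : P p <;> by_cases hq : P q
  · have : {x ∈ ({p, q} : Set α) | P x} = {p, q} := by
      ext x
      refine ⟨fun hx => hx.1, fun hx => ⟨hx, ?_⟩⟩
      rcases hx with rfl | rfl
      · exact hp
      · exact hq
    rw [this, Set.ncard_pair h]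
    simp [hp, hq]
  · have : {x ∈ ({p, q} : Set α) | P x} = {p} := by
      ext x
      constructor
      · rintro ⟨rfl | rfl, hx⟩
        · rfl
        · exact absurd hx hq
      · rintro rfl; exact ⟨Or.inl rfl, hp⟩
    rw [this, Set.ncard_singleton]
    simp [hp, hq]
  · have : {x ∈ ({p, q} : Set α) | P x} = {q} := by
      ext x
      constructor
      · rintro ⟨rfl | rfl, hx⟩
        · exact absurd hx hp
        · rfl
      · rintro rfl; exact ⟨Or.inr rfl, hq⟩
    rw [this, Set.ncard_singleton]
    simp [hp, hq]
  · have : {x ∈ ({p, q} : Set α) | P x} = ∅ := by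
      ext x
      simp only [Set.mem_empty_iff_false, iff_false]
      rintro ⟨rfl | rfl, hx⟩
      · exact hp hx
      · exact hq hx
    rw [this, Set.ncard_empty]
    simp [hp, hq]

lemma ne_pq (cfg : SwapCfg G H a b c d) : s(a,b) ≠ s(c,d) :=
  sym2_ne (fun h => cfg.hac h.1) (fun h => cfg.had h.1)
lemma ne_rt (cfg : SwapCfg G H a b c d) : s(b,c) ≠ s(a,d) :=
  sym2_ne (fun h => cfg.hab h.1.symm) (fun h => cfg.hbd h.1)

lemma crossCount_identity_gen (cfg : SwapCfg G H a b c d) (P : Sym2 V → Prop) :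
    {e ∈ H.edgeSet | P e}.ncard
      + ((if P s(a,b) then 1 else 0) + (if P s(c,d) then 1 else 0))
    = {e ∈ G.edgeSet | P e}.ncard
      + ((if P s(b,c) then 1 else 0) + (if P s(a,d) then 1 else 0)) := by
  classical
  have hrE : s(b,c) ∉ G.edgeSet := cfg.nbc
  have htE : s(a,d) ∉ G.edgeSet := cfg.nad
  have hpE : s(a,b) ∈ G.edgeSet := cfg.Gab
  have hqE : s(c,d) ∈ G.edgeSet := cfg.Gcd
  have hcs : {e ∈ H.edgeSet | P e}
      = ({e ∈ G.edgeSet | P e} \ {s(a,b), s(c,d)})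
        ∪ {e ∈ ({s(b,c), s(a,d)} : Set (Sym2 V)) | P e} := by
    ext e
    simp only [cfg.hE, Set.mem_union, Set.mem_diff, Set.mem_sep_iff, Set.mem_insert_iff,
      Set.mem_singleton_iff, Set.mem_setOf_eq]
    tauto
  have hdisj : Disjoint ({e ∈ G.edgeSet | P e} \ {s(a,b), s(c,d)})
      {e ∈ ({s(b,c), s(a,d)} : Set (Sym2 V)) | P e} := by
    rw [Set.disjoint_left]
    rintro e ⟨⟨heG, -⟩, -⟩ ⟨he, -⟩
    rcases he with rfl | rfl
    · exact hrE heG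
    · exact htE heG
  have hsplit := Set.ncard_inter_add_ncard_diff_eq_ncard {e ∈ G.edgeSet | P e}
    ({s(a,b), s(c,d)} : Set (Sym2 V))
  have hinter : {e ∈ G.edgeSet | P e} ∩ ({s(a,b), s(c,d)} : Set (Sym2 V))
      = {e ∈ ({s(a,b), s(c,d)} : Set (Sym2 V)) | P e} := by
    ext e
    constructor
    · rintro ⟨⟨-, hPe⟩, he⟩; exact ⟨he, hPe⟩
    · rintro ⟨he, hPe⟩
      refine ⟨⟨?_, hPe⟩, he⟩
      rcases he with rfl | rfl
      · exact hpE
      · exact hqE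
  rw [hcs, Set.ncard_union_eq hdisj]
  rw [hinter, ncard_sep_pair P cfg.ne_pq] at hsplit
  rw [ncard_sep_pair P cfg.ne_rt]
  omega

lemma crossCount_le (cfg : SwapCfg G H a b c d) (U W : Set V) :
    crossCount U W H ≤ crossCount U W G + 2 ∧ crossCount U W G ≤ crossCount U W H + 2 := by
  classical
  have h := cfg.crossCount_identity_gen (fun e => ∃ u ∈ U, ∃ w ∈ W, e = s(u,w))
  have hH : crossCount U W H = {e ∈ H.edgeSet | ∃ u ∈ U, ∃ w ∈ W, e = s(u,w)}.ncard := rfl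
  have hG : crossCount U W G = {e ∈ G.edgeSet | ∃ u ∈ U, ∃ w ∈ W, e = s(u,w)}.ncard := rfl
  rw [← hH, ← hG] at h
  split_ifs at h <;> omega

lemma crossCount_parity (cfg : SwapCfg G H a b c d) {U W : Set V}
    (hUW : Disjoint U W) (hcov : U ∪ W = Set.univ) :
    crossCount U W H % 2 = crossCount U W G % 2 := by
  classical
  have hmemW : ∀ v : V, v ∉ U → v ∈ W := by
    intro v hv
    have h2 : v ∈ U ∪ W := hcov.symm ▸ Set.mem_univ v
    rcases h2 with h | h
    · exact absurd h hv
    · exact h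
  have hx : ∀ x y : V, (∃ u ∈ U, ∃ w ∈ W, s(x,y) = s(u,w)) ↔
      ((x ∈ U ∧ y ∉ U) ∨ (y ∈ U ∧ x ∉ U)) := by
    intro x y
    constructor
    · rintro ⟨u, hu, w, hw, he⟩
      rw [Sym2.eq_iff] at he
      rcases he with ⟨rfl, rfl⟩ | ⟨rfl, rfl⟩
      · exact Or.inl ⟨hu, fun hx => Set.disjoint_left.mp hUW hx hw⟩
      · exact Or.inr ⟨hu, fun hx => Set.disjoint_left.mp hUW hx hw⟩
    · rintro (⟨hxU, hyn⟩ | ⟨hyU, hxn⟩)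
      · exact ⟨x, hxU, y, hmemW y hyn, rfl⟩
      · exact ⟨y, hyU, x, hmemW x hxn, Sym2.eq_swap⟩
  have h := cfg.crossCount_identity_gen (fun e => ∃ u ∈ U, ∃ w ∈ W, e = s(u,w))
  have hH : crossCount U W H = {e ∈ H.edgeSet | ∃ u ∈ U, ∃ w ∈ W, e = s(u,w)}.ncard := rfl
  have hG : crossCount U W G = {e ∈ G.edgeSet | ∃ u ∈ U, ∃ w ∈ W, e = s(u,w)}.ncard := rfl
  rw [← hH, ← hG] at h
  simp only [hx] at h
  by_cases ha : a ∈ U <;> by_cases hb : b ∈ U <;> by_cases hc : c ∈ U <;>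
    by_cases hd : d ∈ U <;> simp only [ha, hb, hc, hd] at h <;> simp at h <;> omega

end Cross

end SwapCfg

lemma set_shuffle {α : Type*} {E : Set α} {p q r t : α} (hp : p ∈ E) (hq : q ∈ E)
    (hr : r ∉ E) (ht : t ∉ E) :
    (((E \ {p, q}) ∪ {r, t}) \ {r, t}) ∪ {p, q} = E := by
  ext x
  simp only [Set.mem_union, Set.mem_diff, Set.mem_insert_iff, Set.mem_singleton_iff]
  constructor
  · rintro (⟨h1 | h2, h3⟩ | (rfl | rfl))
    · exact h1.1
    · exact absurd h2 h3
    · exact hp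
    · exact hq
  · intro hxE
    by_cases hxp : x = p
    · exact Or.inr (Or.inl hxp)
    by_cases hxq : x = q
    · exact Or.inr (Or.inr hxq)
    refine Or.inl ⟨Or.inl ⟨hxE, by tauto⟩, ?_⟩
    rintro (rfl | rfl)
    · exact hr hxE
    · exact ht hxE

lemma IsSwap.symm {G H : SimpleGraph V} (h : IsSwap G H) : IsSwap H G := by
  obtain ⟨a, b, c, d, -, -, -, -, hab, hac, had, hbc, hbd, hcd, Gab, Gcd, nbc, nad, hE⟩ := h
  have eda : s(d,a) = s(a,d) := Sym2.eq_swap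
  have edc : s(d,c) = s(c,d) := Sym2.eq_swap
  have hpr : s(a,b) ≠ s(b,c) := sym2_ne (fun h => hab h.1) (fun h => hac h.1)
  have hpt : s(a,b) ≠ s(a,d) := sym2_ne (fun h => hbd h.2) (fun h => had h.1)
  have hqr : s(c,d) ≠ s(b,c) := sym2_ne (fun h => hbc h.1.symm) (fun h => hbd h.2.symm)
  have hqt : s(c,d) ≠ s(a,d) := sym2_ne (fun h => hac h.1.symm) (fun h => hcd h.1)
  have hrE : s(b,c) ∉ G.edgeSet := nbc
  have htE : s(a,d) ∉ G.edgeSet := nad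
  refine ⟨d, a, b, c, trivial, trivial, trivial, trivial, had.symm, hbd.symm, hcd.symm,
    hab, hac, hbc, ?_, ?_, ?_, ?_, ?_⟩
  · -- H.Adj d a
    rw [← SimpleGraph.mem_edgeSet, eda, hE]
    exact Or.inr (Or.inr rfl)
  · -- H.Adj b c
    rw [← SimpleGraph.mem_edgeSet, hE]
    exact Or.inr (Or.inl rfl)
  · -- ¬ H.Adj a b
    rw [← SimpleGraph.mem_edgeSet, hE]
    rintro (⟨-, hmem⟩ | (he | he))
    · exact hmem (Or.inl rfl)
    · exact hpr he
    · exact hpt (by simpa using he)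
  · -- ¬ H.Adj d c
    rw [← SimpleGraph.mem_edgeSet, edc, hE]
    rintro (⟨-, hmem⟩ | (he | he))
    · exact hmem (Or.inr rfl)
    · exact hqr he
    · exact hqt (by simpa using he)
  · rw [hE, eda, edc, Set.pair_comm (s(a,d)) (s(b,c))]
    have hpE : s(a,b) ∈ G.edgeSet := Gab
    have hqE : s(c,d) ∈ G.edgeSet := Gcd
    exact (set_shuffle hpE hqE hrE htE).symm



section Paths
open Relation
variable [Fintype V] {G H : SimpleGraph V}

lemma IsSwap.toCfg (h : IsSwap G H) : ∃ a b c d : V, SwapCfg G H a b c d := by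
  obtain ⟨a, b, c, d, -, -, -, -, h1, h2, h3, h4, h5, h6, h7, h8, h9, h10, h11⟩ := h
  exact ⟨a, b, c, d, h1, h2, h3, h4, h5, h6, h7, h8, h9, h10, h11⟩

lemma IsSwap.gdeg_eq (h : IsSwap G H) (v : V) : gdeg H v = gdeg G v := by
  obtain ⟨a, b, c, d, cfg⟩ := h.toCfg; exact cfg.gdeg_eq v

lemma IsSwap.crossCount_le' (h : IsSwap G H) (U W : Set V) :
    crossCount U W H ≤ crossCount U W G + 2 ∧ crossCount U W G ≤ crossCount U W H + 2 := by
  obtain ⟨a, b, c, d, cfg⟩ := h.toCfg; exact cfg.crossCount_le U W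

lemma IsSwap.crossCount_parity' (h : IsSwap G H) {U W : Set V}
    (hUW : Disjoint U W) (hcov : U ∪ W = Set.univ) :
    crossCount U W H % 2 = crossCount U W G % 2 := by
  obtain ⟨a, b, c, d, cfg⟩ := h.toCfg; exact cfg.crossCount_parity hUW hcov

lemma path_gdeg (h : ReflTransGen IsSwap G H) (v : V) : gdeg H v = gdeg G v := by
  induction h with
  | refl => rfl
  | tail _ hstep ih => rw [hstep.gdeg_eq v, ih]

lemma path_parity {U W : Set V} (hUW : Disjoint U W) (hcov : U ∪ W = Set.univ)
    (h : ReflTransGen IsSwap G H) :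
    crossCount U W H % 2 = crossCount U W G % 2 := by
  induction h with
  | refl => rfl
  | tail _ hstep ih => rw [hstep.crossCount_parity' hUW hcov, ih]

lemma path_ivt {U W : Set V} (hUW : Disjoint U W) (hcov : U ∪ W = Set.univ)
    (h : ReflTransGen IsSwap G H) :
    ∀ k, crossCount U W G ≤ k → k ≤ crossCount U W H → k % 2 = crossCount U W G % 2 →
      ∃ X, ReflTransGen IsSwap G X ∧ crossCount U W X = k := by
  induction h with
  | refl =>
    intro k h1 h2 _
    exact ⟨G, ReflTransGen.refl, le_antisymm h1 h2⟩
  | @tail H' H'' hpath hstep ih =>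
    intro k h1 h2 h3
    by_cases hk : k ≤ crossCount U W H'
    · obtain ⟨X, hX1, hX2⟩ := ih k h1 hk h3
      exact ⟨X, hX1, hX2⟩
    · push_neg at hk
      have hb := hstep.crossCount_le' U W
      have hp := hstep.crossCount_parity' hUW hcov
      have hp2 := path_parity hUW hcov hpath
      have hkH : crossCount U W H'' = k := by omega
      exact ⟨H'', hpath.tail hstep, hkH⟩

lemma path_symm (h : ReflTransGen IsSwap G H) : ReflTransGen IsSwap H G :=
  by haveI : Std.Symm (IsSwap (V := V)) := ⟨fun _ _ hs => IsSwap.symm hs⟩; exact Std.Symm.symm _ _ h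

end Paths

section Norm
open Relation
variable [Fintype V]

/-- edges touched by a swap config lie in the quadruple -/
lemma SwapCfg.symmDiff_sub {G H : SimpleGraph V} {a b c d : V}
    (cfg : SwapCfg G H a b c d) :
    symmDiff G.edgeSet H.edgeSet ⊆ {s(a,b), s(c,d), s(b,c), s(a,d)} := by
  intro e he
  rw [Set.mem_symmDiff] at he
  simp only [cfg.hE, Set.mem_union, Set.mem_diff, Set.mem_insert_iff,
    Set.mem_singleton_iff] at he ⊢
  tauto

lemma norm_lemma [DecidableEq V] (S : Finset V) (f : V → ℕ) (w : V) (hw : w ∈ S)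
    (T : Finset V) (hT : T ⊆ S.erase w)
    (hTP : ∀ x ∈ T, ∀ y ∈ S.erase w, y ∉ T → f y ≤ f x) :
    ∀ (n : ℕ) (G : SimpleGraph V),
      (∀ v, (G.neighborSet v ∩ ↑S).ncard = f v) →
      T.card = f w →
      ((G.neighborSet w ∩ ↑S) \ ↑T).ncard ≤ n →
      ∃ G₁ : SimpleGraph V, ReflTransGen IsSwap G G₁ ∧
        (∀ v, gdeg G₁ v = gdeg G v) ∧
        (G₁.neighborSet w ∩ ↑S) = ↑T ∧
        (∀ e ∈ symmDiff G.edgeSet G₁.edgeSet, ∀ v ∈ e, v ∈ S) := by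
  intro n
  induction n with
  | zero =>
    intro G hf hcardT hmeas
    have hempty : (G.neighborSet w ∩ ↑S) \ ↑T = ∅ := by
      by_contra hne
      have hpos : 0 < ((G.neighborSet w ∩ ↑S) \ ↑T).ncard :=
        (Set.ncard_pos).mpr (Set.nonempty_iff_ne_empty.mpr hne)
      omega
    have hsub : (G.neighborSet w ∩ ↑S) ⊆ ↑T := by
      intro u hu
      by_contra hun
      rw [Set.eq_empty_iff_forall_notMem] at hempty
      exact hempty u ⟨hu, hun⟩
    have heq : (G.neighborSet w ∩ ↑S) = ↑T :=
      Set.eq_of_subset_of_ncard_le hsub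
        (by rw [Set.ncard_coe_finset, hf w, hcardT]) (Set.toFinite _)
    refine ⟨G, ReflTransGen.refl, fun v => rfl, heq, ?_⟩
    intro e he
    rw [symmDiff_self] at he
    exact absurd he (Set.notMem_empty e)
  | succ n ih =>
    intro G hf hcardT hmeas
    by_cases hNT : (G.neighborSet w ∩ ↑S) = ↑T
    · refine ⟨G, ReflTransGen.refl, fun v => rfl, hNT, ?_⟩
      intro e he
      rw [symmDiff_self] at he
      exact absurd he (Set.notMem_empty e)
    have hwS : w ∈ (↑S : Set V) := Finset.mem_coe.mpr hw
    -- choose y in (N ∩ S) \ T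
    have hyne : ((G.neighborSet w ∩ ↑S) \ ↑T).Nonempty := by
      rw [Set.nonempty_iff_ne_empty]
      intro hemp
      apply hNT
      refine Set.eq_of_subset_of_ncard_le ?_ ?_ (Set.toFinite _)
      · intro u hu
        by_contra hun
        rw [Set.eq_empty_iff_forall_notMem] at hemp
        exact hemp u ⟨hu, hun⟩
      · rw [Set.ncard_coe_finset, hf w, hcardT]
    obtain ⟨y, hyNS, hyT⟩ := hyne
    obtain ⟨hyN, hyS⟩ := hyNS
    have hadjwy : G.Adj w y := hyN
    have hyw : y ≠ w := fun h => G.irrefl (h ▸ hadjwy)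
    have hyerase : y ∈ S.erase w := Finset.mem_erase.mpr ⟨hyw, Finset.mem_coe.mp hyS⟩
    -- choose x in T \ (N ∩ S)
    have hxne : (↑T \ (G.neighborSet w ∩ ↑S) : Set V).Nonempty := by
      rw [Set.nonempty_iff_ne_empty]
      intro hemp
      apply hNT
      refine (Set.eq_of_subset_of_ncard_le ?_ ?_ (Set.toFinite _)).symm
      · intro u hu
        by_contra hun
        rw [Set.eq_empty_iff_forall_notMem] at hemp
        exact hemp u ⟨hu, hun⟩
      · rw [Set.ncard_coe_finset, hf w, hcardT]
    obtain ⟨x, hxT, hxNS⟩ := hxne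
    have hxT' : x ∈ T := Finset.mem_coe.mp hxT
    have hxerase : x ∈ S.erase w := hT hxT'
    have hxS : x ∈ (↑S : Set V) :=
      Finset.mem_coe.mpr (Finset.erase_subset w S hxerase)
    have hxw : x ≠ w := (Finset.mem_erase.mp hxerase).1
    have hxNw : x ∉ G.neighborSet w := fun h => hxNS ⟨h, hxS⟩
    have hnadjwx : ¬ G.Adj w x := hxNw
    have hxy : x ≠ y := fun h => hyT (h ▸ hxT)
    have hfyx : f y ≤ f x := hTP x hxT' y hyerase hyT
    -- counting argument to find z
    set Nx := G.neighborSet x ∩ ↑S with hNx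
    set Ny := G.neighborSet y ∩ ↑S with hNy
    have hwB : w ∈ Ny \ (G.neighborSet x ∪ {x}) := by
      refine ⟨⟨hadjwy.symm, hwS⟩, ?_⟩
      intro hmem
      rcases (Set.mem_union _ _ _).mp hmem with hw' | hw'
      · exact hnadjwx (SimpleGraph.Adj.symm hw')
      · exact hxw (Set.mem_singleton_iff.mp hw').symm
    have hsplit1 := Set.ncard_inter_add_ncard_diff_eq_ncard Nx (G.neighborSet y ∪ {y})
    have hsplit2 := Set.ncard_inter_add_ncard_diff_eq_ncard Ny (G.neighborSet x ∪ {x})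
    have hinter_eq : (Nx ∩ (G.neighborSet y ∪ {y})).ncard
        = (Ny ∩ (G.neighborSet x ∪ {x})).ncard := by
      have h1 : Nx ∩ (G.neighborSet y ∪ {y}) = (Nx ∩ G.neighborSet y) ∪ (Nx ∩ {y}) := by
        rw [Set.inter_union_distrib_left]
      have h2 : Ny ∩ (G.neighborSet x ∪ {x}) = (Ny ∩ G.neighborSet x) ∪ (Ny ∩ {x}) := by
        rw [Set.inter_union_distrib_left]
      have hd1 : Disjoint (Nx ∩ G.neighborSet y) (Nx ∩ {y}) := by
        rw [Set.disjoint_left]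
        rintro u ⟨-, hu2⟩ ⟨-, hu4⟩
        rw [Set.mem_singleton_iff] at hu4
        subst hu4
        exact G.irrefl hu2
      have hd2 : Disjoint (Ny ∩ G.neighborSet x) (Ny ∩ {x}) := by
        rw [Set.disjoint_left]
        rintro u ⟨-, hu2⟩ ⟨-, hu4⟩
        rw [Set.mem_singleton_iff] at hu4
        subst hu4
        exact G.irrefl hu2
      have hcomm : Nx ∩ G.neighborSet y = Ny ∩ G.neighborSet x := by
        ext u
        constructor
        · rintro ⟨⟨h1', h2'⟩, h3'⟩; exact ⟨⟨h3', h2'⟩, h1'⟩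
        · rintro ⟨⟨h1', h2'⟩, h3'⟩; exact ⟨⟨h3', h2'⟩, h1'⟩
      have hsing : (Nx ∩ {y}).ncard = (Ny ∩ {x}).ncard := by
        by_cases hxyadj : G.Adj x y
        · have hy1 : y ∈ Nx ∩ {y} := ⟨⟨hxyadj, hyS⟩, rfl⟩
          have hx1 : x ∈ Ny ∩ {x} := ⟨⟨hxyadj.symm, hxS⟩, rfl⟩
          have e1 : Nx ∩ {y} = {y} := by
            refine Set.eq_of_subset_of_ncard_le Set.inter_subset_right ?_ (Set.toFinite _)
            have := (Set.ncard_pos (Set.toFinite _)).mpr ⟨y, hy1⟩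
            rw [Set.ncard_singleton]
            omega
          have e2 : Ny ∩ {x} = {x} := by
            refine Set.eq_of_subset_of_ncard_le Set.inter_subset_right ?_ (Set.toFinite _)
            have := (Set.ncard_pos (Set.toFinite _)).mpr ⟨x, hx1⟩
            rw [Set.ncard_singleton]
            omega
          rw [e1, e2, Set.ncard_singleton, Set.ncard_singleton]
        · have e1 : Nx ∩ {y} = ∅ := by
            rw [Set.eq_empty_iff_forall_notMem]
            rintro u ⟨⟨hu1, -⟩, hu2⟩
            rw [Set.mem_singleton_iff] at hu2
            subst hu2
            exact hxyadj hu1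
          have e2 : Ny ∩ {x} = ∅ := by
            rw [Set.eq_empty_iff_forall_notMem]
            rintro u ⟨⟨hu1, -⟩, hu2⟩
            rw [Set.mem_singleton_iff] at hu2
            subst hu2
            exact hxyadj hu1.symm
          rw [e1, e2]
      rw [h1, h2, Set.ncard_union_eq hd1, Set.ncard_union_eq hd2, hcomm, hsing]
    have hfx : Nx.ncard = f x := hf x
    have hfy : Ny.ncard = f y := hf y
    have hBpos : 0 < (Ny \ (G.neighborSet x ∪ {x})).ncard :=
      (Set.ncard_pos (Set.toFinite _)).mpr ⟨w, hwB⟩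
    have hApos : 0 < (Nx \ (G.neighborSet y ∪ {y})).ncard := by omega
    obtain ⟨z, hzA⟩ := (Set.ncard_pos (Set.toFinite _)).mp hApos
    obtain ⟨⟨hzNxadj, hzS⟩, hzrest⟩ := hzA
    have hznNy : z ∉ G.neighborSet y := fun h => hzrest ((Set.mem_union _ _ _).mpr (Or.inl h))
    have hzy : z ≠ y := fun h =>
      hzrest ((Set.mem_union _ _ _).mpr (Or.inr (Set.mem_singleton_iff.mpr h)))
    have hadjxz : G.Adj x z := hzNxadj
    have hzx : z ≠ x := fun h => G.irrefl (h ▸ hadjxz.symm)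
    have hzw : z ≠ w := by
      intro h
      subst h
      exact hnadjwx hadjxz.symm
    -- perform the swap (a,b,c,d) = (z,x,w,y)
    obtain ⟨H, cfg⟩ := SwapCfg.exists_swap hzx hzw hzy
      (fun h => hxw h) hxy (fun h => hyw h.symm)
      hadjxz.symm hadjwy (fun h => hnadjwx h.symm) (fun h => hznNy h.symm)
    -- new inner neighborhood of w
    have hnbw : H.neighborSet w ∩ ↑S = insert x ((G.neighborSet w ∩ ↑S) \ {y}) := by
      rw [cfg.nb_c, SwapCfg.insert_diff_inter hxS]
    have hmeas' : ((H.neighborSet w ∩ ↑S) \ ↑T).ncard ≤ n := by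
      have hset : (H.neighborSet w ∩ ↑S) \ ↑T = ((G.neighborSet w ∩ ↑S) \ ↑T) \ {y} := by
        rw [hnbw]
        ext u
        simp only [Set.mem_diff, Set.mem_insert_iff, Set.mem_singleton_iff]
        constructor
        · rintro ⟨rfl | ⟨h1, h2⟩, h3⟩
          · exact absurd hxT h3
          · exact ⟨⟨h1, h3⟩, h2⟩
        · rintro ⟨⟨h1, h2⟩, h3⟩
          exact ⟨Or.inr ⟨h1, h3⟩, h2⟩
      have hmem : y ∈ (G.neighborSet w ∩ ↑S) \ ↑T := ⟨⟨hyN, hyS⟩, hyT⟩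
      have := Set.ncard_diff_singleton_add_one hmem (Set.toFinite _)
      rw [hset]
      omega
    have hf' : ∀ v, (H.neighborSet v ∩ ↑S).ncard = f v := by
      intro v
      rw [cfg.inner_ncard_eq hzS hxS hwS hyS v, hf v]
    obtain ⟨G₁, hpath, hdeg, hres, hsd⟩ := ih H hf' hcardT hmeas'
    refine ⟨G₁, ReflTransGen.head cfg.isSwap hpath, ?_, hres, ?_⟩
    · intro v
      rw [hdeg v, cfg.gdeg_eq v]
    · intro e he v hv
      have htri := symmDiff_triangle G.edgeSet H.edgeSet G₁.edgeSet he
      rcases htri with h | h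
      · have := cfg.symmDiff_sub h
        simp only [Set.mem_insert_iff, Set.mem_singleton_iff] at this
        rcases this with rfl | rfl | rfl | rfl <;>
          (rw [Sym2.mem_iff] at hv; rcases hv with rfl | rfl)
        · exact hzS
        · exact hxS
        · exact hwS
        · exact hyS
        · exact hxS
        · exact hwS
        · exact hzS
        · exact hyS
      · exact hsd e h v hv

end Norm
section Conn
open Relation
variable [Fintype V]

lemma conn_aux [DecidableEq V] :
    ∀ (n : ℕ) (S : Finset V) (G G' : SimpleGraph V), S.card ≤ n →
      (∀ v, gdeg G v = gdeg G' v) →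
      (∀ e ∈ symmDiff G.edgeSet G'.edgeSet, ∀ v ∈ e, v ∈ S) →
      ReflTransGen IsSwap G G' := by
  intro n
  induction n with
  | zero =>
    intro S G G' hcard _ hsd
    have hS : S = ∅ := Finset.card_eq_zero.mp (Nat.le_zero.mp hcard)
    have hempty : symmDiff G.edgeSet G'.edgeSet = ∅ := by
      rw [Set.eq_empty_iff_forall_notMem]
      intro e he
      induction e using Sym2.ind with
      | _ u v =>
        have := hsd _ he u (Sym2.mem_mk_left u v)
        rw [hS] at this
        exact absurd this (Finset.notMem_empty u)
    have : G.edgeSet = G'.edgeSet := symmDiff_eq_bot.mp hempty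
    rw [SimpleGraph.edgeSet_inj.mp this]
  | succ n ih =>
    intro S G G' hcard hdeg hsd
    by_cases hGG : G = G'
    · rw [hGG]
    have hne : symmDiff G.edgeSet G'.edgeSet ≠ ∅ := by
      intro h
      exact hGG (SimpleGraph.edgeSet_inj.mp (symmDiff_eq_bot.mp h))
    obtain ⟨e, he⟩ := Set.nonempty_iff_ne_empty.mpr hne
    obtain ⟨w, hwe⟩ : ∃ w, w ∈ e := by
      induction e using Sym2.ind with
      | _ u v => exact ⟨u, Sym2.mem_mk_left u v⟩
    have hw : w ∈ S := hsd e he w hwe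
    -- edges outside S agree
    have hout : ∀ v, G.neighborSet v \ ↑S = G'.neighborSet v \ ↑S := by
      intro v
      ext u
      have key : u ∉ (↑S : Set V) → (G.Adj v u ↔ G'.Adj v u) := by
        intro huS
        constructor
        · intro hadj
          by_contra hadj'
          have : s(v,u) ∈ symmDiff G.edgeSet G'.edgeSet :=
            Set.mem_symmDiff.mpr (Or.inl ⟨hadj, hadj'⟩)
          exact huS (Finset.mem_coe.mpr (hsd _ this u (Sym2.mem_mk_right v u)))
        · intro hadj
          by_contra hadj'
          have : s(v,u) ∈ symmDiff G.edgeSet G'.edgeSet :=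
            Set.mem_symmDiff.mpr (Or.inr ⟨hadj, hadj'⟩)
          exact huS (Finset.mem_coe.mpr (hsd _ this u (Sym2.mem_mk_right v u)))
      constructor
      · rintro ⟨h1, h2⟩; exact ⟨(key h2).mp h1, h2⟩
      · rintro ⟨h1, h2⟩; exact ⟨(key h2).mpr h1, h2⟩
    have hinner : ∀ v, (G'.neighborSet v ∩ ↑S).ncard = (G.neighborSet v ∩ ↑S).ncard := by
      intro v
      have i1 := Set.ncard_inter_add_ncard_diff_eq_ncard (G.neighborSet v) ↑S
      have i2 := Set.ncard_inter_add_ncard_diff_eq_ncard (G'.neighborSet v) ↑S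
      rw [hout v] at i1
      have hdv := hdeg v
      rw [gdeg, gdeg] at hdv
      omega
    set f : V → ℕ := fun v => (G.neighborSet v ∩ ↑S).ncard with hfdef
    -- target set T
    have hsubNS : G.neighborSet w ∩ ↑S ⊆ ↑(S.erase w) := by
      rintro u ⟨hu1, hu2⟩
      refine Finset.mem_coe.mpr (Finset.mem_erase.mpr ⟨?_, Finset.mem_coe.mp hu2⟩)
      intro h
      exact G.irrefl (h ▸ hu1)
    have hkcard : f w ≤ (S.erase w).card := by
      have := Set.ncard_le_ncard hsubNS (Set.toFinite _)
      rw [Set.ncard_coe_finset] at this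
      exact this
    obtain ⟨T, hTmem, hTmax⟩ := Finset.exists_max_image
      ((S.erase w).powersetCard (f w)) (fun t => ∑ v ∈ t, f v)
      (Finset.powersetCard_nonempty.mpr hkcard)
    obtain ⟨hTsub, hTcard⟩ := Finset.mem_powersetCard.mp hTmem
    have hTP : ∀ x ∈ T, ∀ y ∈ S.erase w, y ∉ T → f y ≤ f x := by
      intro x hx y hy hyT
      by_contra hlt
      push_neg at hlt
      have hxT : x ∈ T := hx
      set T' := insert y (T.erase x) with hT'
      have hyTE : y ∉ T.erase x := fun h => hyT (Finset.mem_of_mem_erase h)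
      have hT'card : T'.card = f w := by
        rw [hT', Finset.card_insert_of_notMem hyTE, Finset.card_erase_of_mem hxT]
        have : 1 ≤ T.card := Finset.card_pos.mpr ⟨x, hxT⟩
        omega
      have hT'sub : T' ⊆ S.erase w := by
        rw [hT']
        intro u hu
        rcases Finset.mem_insert.mp hu with rfl | hu2
        · exact hy
        · exact hTsub (Finset.mem_of_mem_erase hu2)
      have hT'mem : T' ∈ (S.erase w).powersetCard (f w) :=
        Finset.mem_powersetCard.mpr ⟨hT'sub, hT'card⟩
      have hle := hTmax T' hT'mem
      have hsum1 : ∑ v ∈ T, f v = f x + ∑ v ∈ T.erase x, f v :=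
        (Finset.add_sum_erase T f hxT).symm
      have hsum2 : ∑ v ∈ T', f v = f y + ∑ v ∈ T.erase x, f v := by
        rw [hT', Finset.sum_insert hyTE]
      omega
    -- normalize both graphs
    obtain ⟨G₁, hp1, hdeg1, hres1, hsd1⟩ := norm_lemma S f w hw T hTsub hTP
      ((G.neighborSet w ∩ ↑S) \ ↑T).ncard G (fun v => rfl) hTcard le_rfl
    obtain ⟨G'₁, hp2, hdeg2, hres2, hsd2⟩ := norm_lemma S f w hw T hTsub hTP
      ((G'.neighborSet w ∩ ↑S) \ ↑T).ncard G' hinner hTcard le_rfl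
    -- symmDiff of normalized graphs avoids w and stays within S
    have hsdS : ∀ e' ∈ symmDiff G₁.edgeSet G'₁.edgeSet, ∀ v ∈ e', v ∈ S := by
      intro e' he' v hv
      have t1 := symmDiff_triangle G₁.edgeSet G.edgeSet G'₁.edgeSet he'
      rcases t1 with h | h
      · rw [symmDiff_comm] at h
        exact hsd1 e' h v hv
      · have t2 := symmDiff_triangle G.edgeSet G'.edgeSet G'₁.edgeSet h
        rcases t2 with h2 | h2
        · exact hsd e' h2 v hv
        · exact hsd2 e' h2 v hv
    have hsd' : ∀ e' ∈ symmDiff G₁.edgeSet G'₁.edgeSet, ∀ v ∈ e', v ∈ S.erase w := by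
      intro e' he' v hv
      refine Finset.mem_erase.mpr ⟨?_, hsdS e' he' v hv⟩
      rintro rfl
      obtain ⟨u, rfl⟩ := Sym2.mem_iff_exists.mp hv
      have huS : u ∈ S := by
        have : u ∈ s(v, u) := Sym2.mem_mk_right v u
        exact hsdS _ he' u this
      have huv : u ≠ v := by
        rintro rfl
        have : s(u,u) ∈ G₁.edgeSet ∨ s(u,u) ∈ G'₁.edgeSet := by
          rcases Set.mem_symmDiff.mp he' with ⟨h1, -⟩ | ⟨h1, -⟩
          · exact Or.inl h1
          · exact Or.inr h1
        rcases this with h1 | h1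
        · exact G₁.not_isDiag_of_mem_edgeSet h1 rfl
        · exact G'₁.not_isDiag_of_mem_edgeSet h1 rfl
      have hu1 : s(v,u) ∈ G₁.edgeSet ↔ u ∈ (G₁.neighborSet v ∩ ↑S) := by
        constructor
        · intro h; exact ⟨h, Finset.mem_coe.mpr huS⟩
        · rintro ⟨h, -⟩; exact h
      have hu2 : s(v,u) ∈ G'₁.edgeSet ↔ u ∈ (G'₁.neighborSet v ∩ ↑S) := by
        constructor
        · intro h; exact ⟨h, Finset.mem_coe.mpr huS⟩
        · rintro ⟨h, -⟩; exact h
      have hTT : G₁.neighborSet v ∩ ↑S = G'₁.neighborSet v ∩ ↑S := by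
        rw [hres1, hres2]
      rcases Set.mem_symmDiff.mp he' with ⟨h1, h2⟩ | ⟨h1, h2⟩
      · exact h2 (hu2.mpr (hTT ▸ hu1.mp h1))
      · exact h2 (hu1.mpr (hTT.symm ▸ hu2.mp h1))
    have hcard' : (S.erase w).card ≤ n := by
      rw [Finset.card_erase_of_mem hw]
      have : 1 ≤ S.card := Finset.card_pos.mpr ⟨w, hw⟩
      omega
    have hdeg' : ∀ v, gdeg G₁ v = gdeg G'₁ v := by
      intro v
      rw [hdeg1 v, hdeg2 v, hdeg v]
    have hmid := ih (S.erase w) G₁ G'₁ hcard' hdeg' hsd'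
    exact (hp1.trans hmid).trans (path_symm hp2)

lemma conn_swaps (G G' : SimpleGraph V) (hdeg : ∀ v, gdeg G v = gdeg G' v) :
    ReflTransGen IsSwap G G' := by
  classical
  exact conn_aux Finset.univ.card Finset.univ G G' le_rfl hdeg
    (fun e _ v _ => Finset.mem_univ v)

end Conn
end SwapProofs


/-- For a graphical degree sequence, the attainable crossing-edge counts are exactly the
values between the minimum `m` and the maximum `M` that are congruent to `m` mod `2`. -/
theorem crossCount_attainable_iff {V : Type*} [Fintype V] (U W : Set V)
    (hUW : Disjoint U W) (hcov : U ∪ W = Set.univ) (d : V → ℕ) (m M : ℕ)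
    (hm : IsLeast {n | ∃ G : SimpleGraph V, IsRealization G d ∧ crossCount U W G = n} m)
    (hM : IsGreatest {n | ∃ G : SimpleGraph V, IsRealization G d ∧ crossCount U W G = n} M) :
    ∀ k : ℕ, (∃ G : SimpleGraph V, IsRealization G d ∧ crossCount U W G = k) ↔
      (m ≤ k ∧ k ≤ M ∧ k % 2 = m % 2) := by
    classical
  obtain ⟨⟨Gm, hGmR, hGmC⟩, hmLB⟩ := hm
  obtain ⟨⟨GM, hGMR, hGMC⟩, hMUB⟩ := hM
  intro k
  constructor
  · rintro ⟨G, hGR, hGC⟩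
    refine ⟨hmLB ⟨G, hGR, hGC⟩, hMUB ⟨G, hGR, hGC⟩, ?_⟩
    have hdeg : ∀ v, gdeg Gm v = gdeg G v := fun v => by rw [hGmR v, hGR v]
    have hpath := conn_swaps Gm G hdeg
    have hpar := path_parity hUW hcov hpath
    rw [hGC, hGmC] at hpar
    exact hpar
  · rintro ⟨h1, h2, h3⟩
    have hdeg : ∀ v, gdeg Gm v = gdeg GM v := fun v => by rw [hGmR v, hGMR v]
    have hpath := conn_swaps Gm GM hdeg
    obtain ⟨X, hXpath, hXc⟩ := path_ivt hUW hcov hpath k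
      (by rw [hGmC]; exact h1) (by rw [hGMC]; exact h2) (by rw [hGmC]; exact h3)
    refine ⟨X, ?_, hXc⟩
    intro v
    rw [path_gdeg hXpath v, hGmR v]
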